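/- arXiv:2005.02025 — 2 statements merged into one kernel-verified Lean document; each statement's English description precedes it below -/
import Mathlib

section
/- The 6×6 symmetric matrix Cᵗ representing a trigonal elasticity tensor has characteristic polynomial with roots λ₁, λ₂ (each simple) and λ₃, λ₄ (each double), where λ₁,₂ = ½[C₁₁+C₁₂+C₃₃ ± √((C₁₁+C₁₂−C₃₃)² + 8C₁₃²)] and λ₃,₄ = ½[C₁₁−C₁₂+2C₄₄ ± √((C₁₁−C₁₂−2C₄₄)² + 16C₁₄²)]. -/
set_option maxRecDepth 10000
set_option maxHeartbeats 2000000

open Matrix Polynomial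

private theorem fin_zero_eq_succ_false' {n : ℕ} (i : Fin n) :
    ((0 : Fin (n+1)) = Fin.succ i) = False := by
  simp [(Fin.succ_ne_zero i).symm]

private theorem fin_succ_eq_zero_false' {n : ℕ} (i : Fin n) :
    (Fin.succ i = (0 : Fin (n+1))) = False := by
  simp [Fin.succ_ne_zero i]

private theorem evalmat' {n : Type*} [DecidableEq n] [Fintype n] (M : Matrix n n ℝ) (x : ℝ) :
    (Polynomial.evalRingHom x).mapMatrix (charmatrix M) = x • (1 : Matrix n n ℝ) - M := by
  ext i j
  by_cases h : i = j
  · subst h; simp [charmatrix_apply_eq]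
  · simp [charmatrix_apply_ne _ _ _ h, Matrix.one_apply_ne h]

private theorem trigDet' (C11 C12 C13 C14 C33 C44 x : ℝ) :
    (x • (1 : Matrix (Fin 6) (Fin 6) ℝ) -
      !![C11, C12, C13, Real.sqrt 2 * C14, 0, 0;
         C12, C11, C13, -(Real.sqrt 2 * C14), 0, 0;
         C13, C13, C33, 0, 0, 0;
         Real.sqrt 2 * C14, -(Real.sqrt 2 * C14), 0, 2 * C44, 0, 0;
         0, 0, 0, 0, 2 * C44, 2 * C14;
         0, 0, 0, 0, 2 * C14, C11 - C12]).det =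
      (x^2 - (C11+C12+C33)*x + ((C11+C12)*C33 - 2*C13^2)) *
      (x^2 - (C11-C12+2*C44)*x + (2*(C11-C12)*C44 - 4*C14^2))^2 := by
  have hs : Real.sqrt 2 ^ 2 = 2 := Real.sq_sqrt (by norm_num)
  simp only [Matrix.det_succ_row_zero, Fin.sum_univ_succ, Matrix.submatrix_apply,
    Fin.zero_succAbove, Fin.succ_succAbove_zero, Fin.succ_succAbove_succ,
    Matrix.submatrix_submatrix, Function.comp_apply,
    Matrix.sub_apply, Matrix.smul_apply, Matrix.one_apply, smul_eq_mul,
    Matrix.of_apply, Matrix.cons_val', Matrix.cons_val_zero,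
    Matrix.cons_val_succ, Matrix.head_fin_const, Matrix.empty_val',
    Matrix.cons_val_fin_one, Fin.sum_univ_zero, Matrix.det_fin_zero,
    Finset.univ_unique, Matrix.det_unique, Fin.default_eq_zero, Finset.sum_singleton,
    Fin.val_zero, Fin.val_succ, pow_zero, pow_succ, one_mul, neg_mul, mul_neg, neg_neg,
    mul_zero, zero_mul, mul_one, add_zero, zero_add, sub_zero, zero_sub, neg_zero,
    Fin.succ_inj, fin_zero_eq_succ_false', fin_succ_eq_zero_false', ne_eq,
    if_true, if_false, ite_true, ite_false, Nat.succ_ne_zero, reduceIte]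
  ring_nf
  rw [hs]
  ring

/-- The characteristic polynomial of the trigonal elasticity matrix `Cᵗ`
    factors as `(X - λ₁)(X - λ₂)(X - λ₃)²(X - λ₄)²`, with `λ₁ ≠ λ₂` and
    `λ₃ ≠ λ₄` when `C₁₃ ≠ 0` and `C₁₄ ≠ 0`. -/
theorem stmt_4 (C11 C12 C13 C14 C33 C44 : ℝ) (h13 : C13 ≠ 0) (h14 : C14 ≠ 0)
    (Ct : Matrix (Fin 6) (Fin 6) ℝ)
    (hCt : Ct = !![C11, C12, C13, Real.sqrt 2 * C14, 0, 0;
                   C12, C11, C13, -(Real.sqrt 2 * C14), 0, 0;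
                   C13, C13, C33, 0, 0, 0;
                   Real.sqrt 2 * C14, -(Real.sqrt 2 * C14), 0, 2 * C44, 0, 0;
                   0, 0, 0, 0, 2 * C44, 2 * C14;
                   0, 0, 0, 0, 2 * C14, C11 - C12])
    (lam1 lam2 lam3 lam4 : ℝ)
    (h1 : lam1 = (C11 + C12 + C33 + Real.sqrt ((C11 + C12 - C33)^2 + 8 * C13^2)) / 2)
    (h2 : lam2 = (C11 + C12 + C33 - Real.sqrt ((C11 + C12 - C33)^2 + 8 * C13^2)) / 2)
    (h3 : lam3 = (C11 - C12 + 2 * C44 + Real.sqrt ((C11 - C12 - 2 * C44)^2 + 16 * C14^2)) / 2)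
    (h4 : lam4 = (C11 - C12 + 2 * C44 - Real.sqrt ((C11 - C12 - 2 * C44)^2 + 16 * C14^2)) / 2) :
    Ct.charpoly = (X - C lam1) * (X - C lam2) * (X - C lam3) ^ 2 * (X - C lam4) ^ 2
      ∧ lam1 ≠ lam2 ∧ lam3 ≠ lam4 := by
  have ha : Real.sqrt ((C11 + C12 - C33)^2 + 8 * C13^2) ^ 2
      = (C11 + C12 - C33)^2 + 8 * C13^2 := Real.sq_sqrt (by positivity)
  have hb : Real.sqrt ((C11 - C12 - 2 * C44)^2 + 16 * C14^2) ^ 2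
      = (C11 - C12 - 2 * C44)^2 + 16 * C14^2 := Real.sq_sqrt (by positivity)
  have hapos : 0 < Real.sqrt ((C11 + C12 - C33)^2 + 8 * C13^2) :=
    Real.sqrt_pos.2 (by positivity)
  have hbpos : 0 < Real.sqrt ((C11 - C12 - 2 * C44)^2 + 16 * C14^2) :=
    Real.sqrt_pos.2 (by positivity)
  refine ⟨?_, ?_, ?_⟩
  · apply Polynomial.funext
    intro x
    rw [Matrix.charpoly, ← Polynomial.coe_evalRingHom, RingHom.map_det, evalmat', hCt,
      trigDet']
    simp only [Polynomial.coe_evalRingHom, eval_mul, eval_pow, eval_sub, eval_X, eval_C]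
    have e1 : (x - lam1) * (x - lam2)
        = x^2 - (C11+C12+C33)*x + ((C11+C12)*C33 - 2*C13^2) := by
      subst h1 h2; linear_combination (-(1:ℝ)/4) * ha
    have e2 : (x - lam3) * (x - lam4)
        = x^2 - (C11-C12+2*C44)*x + (2*(C11-C12)*C44 - 4*C14^2) := by
      subst h3 h4; linear_combination (-(1:ℝ)/4) * hb
    calc (x^2 - (C11+C12+C33)*x + ((C11+C12)*C33 - 2*C13^2)) *
          (x^2 - (C11-C12+2*C44)*x + (2*(C11-C12)*C44 - 4*C14^2))^2
        = ((x - lam1) * (x - lam2)) * ((x - lam3) * (x - lam4))^2 := by rw [e1, e2]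
      _ = (x - lam1) * (x - lam2) * (x - lam3)^2 * (x - lam4)^2 := by ring
  · subst h1 h2
    intro h
    nlinarith [hapos]
  · subst h3 h4
    intro h
    nlinarith [hbpos]
end

section
/- The trigonal symmetry group G_t is not a subgroup of the cubic symmetry group G_c, but with Â = [[√2/2, √6/6, √3/3],[−√2/2, √6/6, √3/3],[0, −√6/3, √3/3]], the conjugate group Âᵀ G_c Â contains G_t as a proper subgroup. -/
open Matrix Real

/-- Rotation about `e₁` by angle `θ`. -/
noncomputable def rotX (θ : ℝ) : Matrix (Fin 3) (Fin 3) ℝ :=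
  !![1, 0, 0; 0, Real.cos θ, -Real.sin θ; 0, Real.sin θ, Real.cos θ]

/-- Rotation about `e₂` by angle `θ`. -/
noncomputable def rotY (θ : ℝ) : Matrix (Fin 3) (Fin 3) ℝ :=
  !![Real.cos θ, 0, Real.sin θ; 0, 1, 0; -Real.sin θ, 0, Real.cos θ]

/-- Rotation about `e₃` by angle `θ`. -/
noncomputable def rotZ (θ : ℝ) : Matrix (Fin 3) (Fin 3) ℝ :=
  !![Real.cos θ, -Real.sin θ, 0; Real.sin θ, Real.cos θ, 0; 0, 0, 1]

/-- Reflection about the plane with unit normal `n`. -/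
noncomputable def reflM (n : Fin 3 → ℝ) : Matrix (Fin 3) (Fin 3) ℝ :=
  1 - (2 : ℝ) • vecMulVec n n

/-- The trigonal symmetry group. -/
noncomputable def Gt : Set (Matrix (Fin 3) (Fin 3) ℝ) :=
  {1, -1, rotZ (2*π/3), -rotZ (2*π/3), rotZ (-(2*π/3)), -rotZ (-(2*π/3)),
   reflM ![1, 0, 0], -reflM ![1, 0, 0],
   reflM ![Real.cos (π/3), Real.sin (π/3), 0], -reflM ![Real.cos (π/3), Real.sin (π/3), 0],
   reflM ![Real.cos (2*π/3), Real.sin (2*π/3), 0], -reflM ![Real.cos (2*π/3), Real.sin (2*π/3), 0]}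

/-- The listed elements generating the cubic symmetry group (up to sign). -/
noncomputable def GcGens : Set (Matrix (Fin 3) (Fin 3) ℝ) :=
  {A | ∃ B ∈ [(1 : Matrix (Fin 3) (Fin 3) ℝ),
      rotX (π/2), rotX (-(π/2)), rotY (π/2), rotY (-(π/2)), rotZ (π/2), rotZ (-(π/2)),
      reflM ![1, 0, 0], reflM ![0, 1, 0], reflM ![0, 0, 1],
      reflM ![1/Real.sqrt 2, 1/Real.sqrt 2, 0], reflM ![1/Real.sqrt 2, -(1/Real.sqrt 2), 0],
      reflM ![1/Real.sqrt 2, 0, 1/Real.sqrt 2], reflM ![1/Real.sqrt 2, 0, -(1/Real.sqrt 2)],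
      reflM ![0, 1/Real.sqrt 2, 1/Real.sqrt 2], reflM ![0, 1/Real.sqrt 2, -(1/Real.sqrt 2)]],
    A = B ∨ A = -B}

/-- The cubic symmetry group: the multiplicative closure of the listed elements. -/
noncomputable def Gc : Set (Matrix (Fin 3) (Fin 3) ℝ) := Submonoid.closure GcGens

/-- The matrix `Â`. -/
noncomputable def Ahat : Matrix (Fin 3) (Fin 3) ℝ :=
  !![Real.sqrt 2 / 2, Real.sqrt 6 / 6, Real.sqrt 3 / 3;
     -(Real.sqrt 2 / 2), Real.sqrt 6 / 6, Real.sqrt 3 / 3;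
     0, -(Real.sqrt 6 / 3), Real.sqrt 3 / 3]

/- ===== auxiliary lemmas ===== -/

private lemma hp2 : Real.sqrt 2 ^ 2 = 2 := Real.sq_sqrt (by norm_num)
private lemma hp3 : Real.sqrt 3 ^ 2 = 3 := Real.sq_sqrt (by norm_num)
private lemma h6eq : Real.sqrt 6 = Real.sqrt 2 * Real.sqrt 3 := by
  rw [show (6:ℝ) = 2*3 by norm_num, Real.sqrt_mul (by norm_num)]
private lemma hinv2 : (Real.sqrt 2)⁻¹ * (Real.sqrt 2)⁻¹ = 1/2 := by
  rw [← mul_inv, Real.mul_self_sqrt (by norm_num)]; norm_num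

private lemma hc23 : Real.cos (2*π/3) = -(1/2) := by
  rw [show 2*π/3 = π - π/3 by ring, Real.cos_pi_sub, Real.cos_pi_div_three]
private lemma hs23 : Real.sin (2*π/3) = Real.sqrt 3/2 := by
  rw [show 2*π/3 = π - π/3 by ring, Real.sin_pi_sub, Real.sin_pi_div_three]

lemma reflM_eq (a b c : ℝ) : reflM ![a,b,c] =
    !![1-2*(a*a), -(2*(a*b)), -(2*(a*c));
       -(2*(a*b)), 1-2*(b*b), -(2*(b*c));
       -(2*(a*c)), -(2*(b*c)), 1-2*(c*c)] := by
  ext i j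
  fin_cases i <;> fin_cases j <;>
    simp [reflM, vecMulVec_apply, Matrix.one_apply, Matrix.sub_apply, Matrix.smul_apply] <;> ring

private lemma Ahat_eq : Ahat =
    !![Real.sqrt 2/2, Real.sqrt 2*Real.sqrt 3/6, Real.sqrt 3/3;
       -(Real.sqrt 2/2), Real.sqrt 2*Real.sqrt 3/6, Real.sqrt 3/3;
       0, -(Real.sqrt 2*Real.sqrt 3/3), Real.sqrt 3/3] := by
  unfold Ahat; rw [h6eq]

/- explicit forms of generators -/
private lemma e_rxp : rotX (π/2) = !![1,0,0;0,0,-1;0,1,0] := by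
  rw [rotX, Real.cos_pi_div_two, Real.sin_pi_div_two]
private lemma e_rxm : rotX (-(π/2)) = !![1,0,0;0,0,1;0,-1,0] := by
  rw [rotX, Real.cos_neg, Real.sin_neg, Real.cos_pi_div_two, Real.sin_pi_div_two]; norm_num
private lemma e_ryp : rotY (π/2) = !![0,0,1;0,1,0;-1,0,0] := by
  rw [rotY, Real.cos_pi_div_two, Real.sin_pi_div_two]
private lemma e_rym : rotY (-(π/2)) = !![0,0,-1;0,1,0;1,0,0] := by
  rw [rotY, Real.cos_neg, Real.sin_neg, Real.cos_pi_div_two, Real.sin_pi_div_two]; norm_num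
private lemma e_rzp : rotZ (π/2) = !![0,-1,0;1,0,0;0,0,1] := by
  rw [rotZ, Real.cos_pi_div_two, Real.sin_pi_div_two]
private lemma e_rzm : rotZ (-(π/2)) = !![0,1,0;-1,0,0;0,0,1] := by
  rw [rotZ, Real.cos_neg, Real.sin_neg, Real.cos_pi_div_two, Real.sin_pi_div_two]; norm_num
private lemma e_rz23 : rotZ (2*π/3) =
    !![-(1/2), -(Real.sqrt 3/2), 0; Real.sqrt 3/2, -(1/2), 0; 0,0,1] := by
  rw [rotZ, hc23, hs23]
private lemma e_rz23m : rotZ (-(2*π/3)) =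
    !![-(1/2), Real.sqrt 3/2, 0; -(Real.sqrt 3/2), -(1/2), 0; 0,0,1] := by
  rw [rotZ, Real.cos_neg, Real.sin_neg, hc23, hs23]; norm_num
private lemma e_g1 : reflM ![1,0,0] = !![-1,0,0;0,1,0;0,0,1] := by
  rw [reflM_eq]; norm_num
private lemma e_g2' : reflM ![0,1,0] = !![1,0,0;0,-1,0;0,0,1] := by
  rw [reflM_eq]; norm_num
private lemma e_g3' : reflM ![0,0,1] = !![1,0,0;0,1,0;0,0,-1] := by
  rw [reflM_eq]; norm_num
private lemma e_gt2 : reflM ![Real.cos (π/3), Real.sin (π/3), 0] =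
    !![1/2, -(Real.sqrt 3/2), 0; -(Real.sqrt 3/2), -(1/2), 0; 0,0,1] := by
  rw [Real.cos_pi_div_three, Real.sin_pi_div_three, reflM_eq]
  ext i j; fin_cases i <;> fin_cases j <;> norm_num <;>
    ((try simp [Matrix.vecHead, Matrix.vecTail]); (try ring_nf); (try simp only [hp2, hp3]); (try norm_num); (try ring_nf))
private lemma e_gt3 : reflM ![Real.cos (2*π/3), Real.sin (2*π/3), 0] =
    !![1/2, Real.sqrt 3/2, 0; Real.sqrt 3/2, -(1/2), 0; 0,0,1] := by
  rw [hc23, hs23, reflM_eq]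
  ext i j; fin_cases i <;> fin_cases j <;> norm_num <;>
    ((try simp [Matrix.vecHead, Matrix.vecTail]); (try ring_nf); (try simp only [hp2, hp3]); (try norm_num); (try ring_nf))
private lemma e_d1 : reflM ![1/Real.sqrt 2, 1/Real.sqrt 2, 0] = !![0,-1,0;-1,0,0;0,0,1] := by
  rw [reflM_eq]; ext i j; fin_cases i <;> fin_cases j <;> norm_num [hinv2]
private lemma e_d2 : reflM ![1/Real.sqrt 2, -(1/Real.sqrt 2), 0] = !![0,1,0;1,0,0;0,0,1] := by
  rw [reflM_eq]; ext i j; fin_cases i <;> fin_cases j <;> norm_num [hinv2]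
private lemma e_d3 : reflM ![1/Real.sqrt 2, 0, 1/Real.sqrt 2] = !![0,0,-1;0,1,0;-1,0,0] := by
  rw [reflM_eq]; ext i j; fin_cases i <;> fin_cases j <;> norm_num [hinv2]
private lemma e_d4 : reflM ![1/Real.sqrt 2, 0, -(1/Real.sqrt 2)] = !![0,0,1;0,1,0;1,0,0] := by
  rw [reflM_eq]; ext i j; fin_cases i <;> fin_cases j <;> norm_num [hinv2]
private lemma e_d5 : reflM ![0, 1/Real.sqrt 2, 1/Real.sqrt 2] = !![1,0,0;0,0,-1;0,-1,0] := by
  rw [reflM_eq]; ext i j; fin_cases i <;> fin_cases j <;> norm_num [hinv2]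
private lemma e_d6 : reflM ![0, 1/Real.sqrt 2, -(1/Real.sqrt 2)] = !![1,0,0;0,0,1;0,1,0] := by
  rw [reflM_eq]; ext i j; fin_cases i <;> fin_cases j <;> norm_num [hinv2]

private lemma AhatT_eq : Ahatᵀ =
    !![Real.sqrt 2/2, -(Real.sqrt 2/2), 0;
       Real.sqrt 2*Real.sqrt 3/6, Real.sqrt 2*Real.sqrt 3/6, -(Real.sqrt 2*Real.sqrt 3/3);
       Real.sqrt 3/3, Real.sqrt 3/3, Real.sqrt 3/3] := by
  rw [Ahat_eq]
  ext i j; fin_cases i <;> fin_cases j <;> simp [Matrix.transpose_apply, Matrix.vecHead, Matrix.vecTail]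

/- orthogonality -/
private lemma AhatT : Ahatᵀ * Ahat = 1 := by
  rw [AhatT_eq, Ahat_eq]
  ext i j
  fin_cases i <;> fin_cases j <;>
    simp [Matrix.mul_apply, Fin.sum_univ_three, Matrix.transpose_apply, Matrix.one_apply] <;>
    ((try simp [Matrix.vecHead, Matrix.vecTail]); (try ring_nf); (try simp only [hp2, hp3]); (try norm_num); (try ring_nf))

private lemma conj_eq {B g : Matrix (Fin 3) (Fin 3) ℝ} (h : B * Ahat = Ahat * g) :
    Ahatᵀ * B * Ahat = g := by
  rw [Matrix.mul_assoc, h, ← Matrix.mul_assoc, AhatT, Matrix.one_mul]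

private lemma conj_eq_neg {B g : Matrix (Fin 3) (Fin 3) ℝ} (h : B * Ahat = Ahat * g) :
    Ahatᵀ * (-B) * Ahat = -g := by
  rw [Matrix.mul_neg, Matrix.neg_mul, conj_eq h]

/- the five key conjugation identities -/
private lemma id1 : (!![0,0,1;1,0,0;0,1,0] : Matrix (Fin 3) (Fin 3) ℝ) * Ahat
    = Ahat * rotZ (2*π/3) := by
  rw [Ahat_eq, e_rz23]
  ext i j; fin_cases i <;> fin_cases j <;>
    simp [Matrix.mul_apply, Fin.sum_univ_three] <;>
    ((try simp [Matrix.vecHead, Matrix.vecTail]); (try ring_nf); (try simp only [hp2, hp3]); (try norm_num); (try ring_nf))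
private lemma id2 : (!![0,1,0;0,0,1;1,0,0] : Matrix (Fin 3) (Fin 3) ℝ) * Ahat
    = Ahat * rotZ (-(2*π/3)) := by
  rw [Ahat_eq, e_rz23m]
  ext i j; fin_cases i <;> fin_cases j <;>
    simp [Matrix.mul_apply, Fin.sum_univ_three] <;>
    ((try simp [Matrix.vecHead, Matrix.vecTail]); (try ring_nf); (try simp only [hp2, hp3]); (try norm_num); (try ring_nf))
private lemma id3 : (!![0,1,0;1,0,0;0,0,1] : Matrix (Fin 3) (Fin 3) ℝ) * Ahat
    = Ahat * reflM ![1,0,0] := by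
  rw [Ahat_eq, e_g1]
  ext i j; fin_cases i <;> fin_cases j <;>
    simp [Matrix.mul_apply, Fin.sum_univ_three] <;>
    ((try simp [Matrix.vecHead, Matrix.vecTail]); (try ring_nf); (try simp only [hp2, hp3]); (try norm_num); (try ring_nf))
private lemma id4 : (!![0,0,1;0,1,0;1,0,0] : Matrix (Fin 3) (Fin 3) ℝ) * Ahat
    = Ahat * reflM ![Real.cos (π/3), Real.sin (π/3), 0] := by
  rw [Ahat_eq, e_gt2]
  ext i j; fin_cases i <;> fin_cases j <;>
    simp [Matrix.mul_apply, Fin.sum_univ_three] <;>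
    ((try simp [Matrix.vecHead, Matrix.vecTail]); (try ring_nf); (try simp only [hp2, hp3]); (try norm_num); (try ring_nf))
private lemma id5 : (!![1,0,0;0,0,1;0,1,0] : Matrix (Fin 3) (Fin 3) ℝ) * Ahat
    = Ahat * reflM ![Real.cos (2*π/3), Real.sin (2*π/3), 0] := by
  rw [Ahat_eq, e_gt3]
  ext i j; fin_cases i <;> fin_cases j <;>
    simp [Matrix.mul_apply, Fin.sum_univ_three] <;>
    ((try simp [Matrix.vecHead, Matrix.vecTail]); (try ring_nf); (try simp only [hp2, hp3]); (try norm_num); (try ring_nf))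

/- products of generators -/
private lemma eP : rotX (π/2) * rotY (π/2) = (!![0,0,1;1,0,0;0,1,0] : Matrix (Fin 3) (Fin 3) ℝ) := by
  rw [e_rxp, e_ryp]
  ext i j; fin_cases i <;> fin_cases j <;>
    simp [Matrix.mul_apply, Fin.sum_univ_three, Matrix.vecHead, Matrix.vecTail]
private lemma eQ : rotX (-(π/2)) * rotZ (-(π/2)) = (!![0,1,0;0,0,1;1,0,0] : Matrix (Fin 3) (Fin 3) ℝ) := by
  rw [e_rxm, e_rzm]
  ext i j; fin_cases i <;> fin_cases j <;>
    simp [Matrix.mul_apply, Fin.sum_univ_three, Matrix.vecHead, Matrix.vecTail]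

/- Gc membership helpers -/
private lemma mem_gens {B : Matrix (Fin 3) (Fin 3) ℝ}
    (h : B ∈ [(1 : Matrix (Fin 3) (Fin 3) ℝ),
      rotX (π/2), rotX (-(π/2)), rotY (π/2), rotY (-(π/2)), rotZ (π/2), rotZ (-(π/2)),
      reflM ![1, 0, 0], reflM ![0, 1, 0], reflM ![0, 0, 1],
      reflM ![1/Real.sqrt 2, 1/Real.sqrt 2, 0], reflM ![1/Real.sqrt 2, -(1/Real.sqrt 2), 0],
      reflM ![1/Real.sqrt 2, 0, 1/Real.sqrt 2], reflM ![1/Real.sqrt 2, 0, -(1/Real.sqrt 2)],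
      reflM ![0, 1/Real.sqrt 2, 1/Real.sqrt 2], reflM ![0, 1/Real.sqrt 2, -(1/Real.sqrt 2)]]) :
    B ∈ Submonoid.closure GcGens :=
  Submonoid.subset_closure ⟨B, h, Or.inl rfl⟩

private lemma neg_one_mem : (-1 : Matrix (Fin 3) (Fin 3) ℝ) ∈ Submonoid.closure GcGens :=
  Submonoid.subset_closure ⟨1, by simp, Or.inr rfl⟩

private lemma neg_mem {B : Matrix (Fin 3) (Fin 3) ℝ} (h : B ∈ Submonoid.closure GcGens) :
    -B ∈ Submonoid.closure GcGens := by
  have := mul_mem neg_one_mem h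
  rwa [neg_one_mul] at this

/- integer-entry submonoid for part 1 -/
private def intMat : Submonoid (Matrix (Fin 3) (Fin 3) ℝ) where
  carrier := {A | ∀ i j, ∃ k : ℤ, A i j = (k : ℝ)}
  one_mem' := by
    intro i j
    refine ⟨if i = j then 1 else 0, ?_⟩
    rw [Matrix.one_apply]; split <;> simp
  mul_mem' := by
    intro A B hA hB i j
    choose f hf using hA
    choose g hg using hB
    refine ⟨∑ l, f i l * g l j, ?_⟩
    rw [Matrix.mul_apply]
    push_cast
    exact Finset.sum_congr rfl fun l _ => by rw [hf, hg]

private lemma int_explicit (M : Matrix (Fin 3) (Fin 3) ℝ)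
    (h : ∀ i j, M i j = 0 ∨ M i j = 1 ∨ M i j = -1) :
    ∀ i j, ∃ k : ℤ, M i j = (k : ℝ) := by
  intro i j
  rcases h i j with h'|h'|h'
  · exact ⟨0, by rw [h']; norm_num⟩
  · exact ⟨1, by rw [h']; norm_num⟩
  · exact ⟨-1, by rw [h']; norm_num⟩

private lemma gens_int : GcGens ⊆ (intMat : Set (Matrix (Fin 3) (Fin 3) ℝ)) := by
  intro A hA
  obtain ⟨B, hBm, hAB⟩ := hA
  have hB : ∀ i j, ∃ k : ℤ, B i j = (k : ℝ) := by
    simp only [List.mem_cons, List.not_mem_nil, or_false] at hBm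
    rcases hBm with rfl|rfl|rfl|rfl|rfl|rfl|rfl|rfl|rfl|rfl|rfl|rfl|rfl|rfl|rfl|rfl
    · exact fun i j => ⟨if i = j then 1 else 0, by rw [Matrix.one_apply]; split <;> simp⟩
    · exact int_explicit _ (by rw [e_rxp]; intro i j; fin_cases i <;> fin_cases j <;> norm_num)
    · exact int_explicit _ (by rw [e_rxm]; intro i j; fin_cases i <;> fin_cases j <;> norm_num)
    · exact int_explicit _ (by rw [e_ryp]; intro i j; fin_cases i <;> fin_cases j <;> norm_num)
    · exact int_explicit _ (by rw [e_rym]; intro i j; fin_cases i <;> fin_cases j <;> norm_num)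
    · exact int_explicit _ (by rw [e_rzp]; intro i j; fin_cases i <;> fin_cases j <;> norm_num)
    · exact int_explicit _ (by rw [e_rzm]; intro i j; fin_cases i <;> fin_cases j <;> norm_num)
    · exact int_explicit _ (by rw [e_g1]; intro i j; fin_cases i <;> fin_cases j <;> norm_num)
    · exact int_explicit _ (by rw [e_g2']; intro i j; fin_cases i <;> fin_cases j <;> norm_num)
    · exact int_explicit _ (by rw [e_g3']; intro i j; fin_cases i <;> fin_cases j <;> norm_num)
    · exact int_explicit _ (by rw [e_d1]; intro i j; fin_cases i <;> fin_cases j <;> norm_num)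
    · exact int_explicit _ (by rw [e_d2]; intro i j; fin_cases i <;> fin_cases j <;> norm_num)
    · exact int_explicit _ (by rw [e_d3]; intro i j; fin_cases i <;> fin_cases j <;> norm_num)
    · exact int_explicit _ (by rw [e_d4]; intro i j; fin_cases i <;> fin_cases j <;> norm_num)
    · exact int_explicit _ (by rw [e_d5]; intro i j; fin_cases i <;> fin_cases j <;> norm_num)
    · exact int_explicit _ (by rw [e_d6]; intro i j; fin_cases i <;> fin_cases j <;> norm_num)
  rcases hAB with rfl|rfl
  · exact hB
  · intro i j
    obtain ⟨k, hk⟩ := hB i j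
    exact ⟨-k, by rw [Matrix.neg_apply, hk]; push_cast; ring⟩

/-- `G_t` is not a subgroup of `G_c`, but it is a proper subgroup of the
    conjugate group `Âᵀ G_c Â`. -/
theorem stmt_13 :
    ¬ (Gt ⊆ Gc) ∧
    Gt ⊆ (fun g => Ahatᵀ * g * Ahat) '' Gc ∧
    Gt ≠ (fun g => Ahatᵀ * g * Ahat) '' Gc := by
  refine ⟨?_, ?_, ?_⟩
  · -- Gt not a subset of Gc
    intro h
    have h1 : rotZ (2*π/3) ∈ Gc := h (by simp [Gt])
    have h2 : rotZ (2*π/3) ∈ intMat := (Submonoid.closure_le.mpr gens_int) h1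
    obtain ⟨k, hk⟩ := h2 0 0
    rw [e_rz23] at hk
    norm_num at hk
    have hk' : (2 * k : ℝ) = -1 := by push_cast; linarith
    have : (2 * k : ℤ) = -1 := by exact_mod_cast hk'
    omega
  · -- Gt ⊆ conjugated Gc
    intro g hg
    simp only [Gt, Set.mem_insert_iff, Set.mem_singleton_iff] at hg
    rcases hg with rfl|rfl|rfl|rfl|rfl|rfl|rfl|rfl|rfl|rfl|rfl|rfl
    · exact ⟨1, one_mem _, conj_eq (by rw [Matrix.one_mul, Matrix.mul_one])⟩
    · exact ⟨-1, neg_one_mem, conj_eq_neg (by rw [Matrix.one_mul, Matrix.mul_one])⟩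
    · exact ⟨rotX (π/2) * rotY (π/2),
        mul_mem (mem_gens (by simp)) (mem_gens (by simp)), conj_eq (by rw [eP]; exact id1)⟩
    · exact ⟨-(rotX (π/2) * rotY (π/2)),
        neg_mem (mul_mem (mem_gens (by simp)) (mem_gens (by simp))),
        conj_eq_neg (by rw [eP]; exact id1)⟩
    · exact ⟨rotX (-(π/2)) * rotZ (-(π/2)),
        mul_mem (mem_gens (by simp)) (mem_gens (by simp)), conj_eq (by rw [eQ]; exact id2)⟩
    · exact ⟨-(rotX (-(π/2)) * rotZ (-(π/2))),
        neg_mem (mul_mem (mem_gens (by simp)) (mem_gens (by simp))),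
        conj_eq_neg (by rw [eQ]; exact id2)⟩
    · exact ⟨reflM ![1/Real.sqrt 2, -(1/Real.sqrt 2), 0], mem_gens (by simp),
        conj_eq (by rw [e_d2]; exact id3)⟩
    · exact ⟨-reflM ![1/Real.sqrt 2, -(1/Real.sqrt 2), 0], neg_mem (mem_gens (by simp)),
        conj_eq_neg (by rw [e_d2]; exact id3)⟩
    · exact ⟨reflM ![1/Real.sqrt 2, 0, -(1/Real.sqrt 2)], mem_gens (by simp),
        conj_eq (by rw [e_d4]; exact id4)⟩
    · exact ⟨-reflM ![1/Real.sqrt 2, 0, -(1/Real.sqrt 2)], neg_mem (mem_gens (by simp)),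
        conj_eq_neg (by rw [e_d4]; exact id4)⟩
    · exact ⟨reflM ![0, 1/Real.sqrt 2, -(1/Real.sqrt 2)], mem_gens (by simp),
        conj_eq (by rw [e_d6]; exact id5)⟩
    · exact ⟨-reflM ![0, 1/Real.sqrt 2, -(1/Real.sqrt 2)], neg_mem (mem_gens (by simp)),
        conj_eq_neg (by rw [e_d6]; exact id5)⟩
  · -- Gt is a proper subset
    intro heq
    have hmem : Ahatᵀ * rotZ (π/2) * Ahat ∈ Gt := by
      rw [heq]
      exact ⟨rotZ (π/2), mem_gens (by simp), rfl⟩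
    have hC : (Ahatᵀ * rotZ (π/2) * Ahat) 2 2 = 1/3 := by
      rw [e_rzp, AhatT_eq, Ahat_eq]
      simp [Matrix.mul_apply, Fin.sum_univ_three, Matrix.transpose_apply]
      ring_nf
      try simp only [hp2, hp3]
      try norm_num
      try ring_nf
    simp only [Gt, Set.mem_insert_iff, Set.mem_singleton_iff] at hmem
    rcases hmem with h|h|h|h|h|h|h|h|h|h|h|h <;> rw [h] at hC <;>
      (try simp only [e_rz23, e_rz23m, e_g1, e_gt2, e_gt3, Matrix.neg_apply] at hC) <;>
      norm_num [Matrix.one_apply, Matrix.cons_val_two, Matrix.tail_cons, Matrix.head_cons] at hC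
end
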